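/- Let Γ₁ = t₀ + t₁ ω̄∧ρ̄ + t₂ ρ̄∧W + t₃ ω̄∧T + t₄ T∧W + t₅ ω̄∧ρ̄∧T∧W + s₀ρ̄ + s₁ω̄ + s₂W + s₃ ρ̄∧T∧W + s₄ ω̄∧T∧W + s₅ ω̄∧ρ̄∧T be an element of the harmonic cohomology with |t₂| < 1 (here s_i are odd and t_i even parameters). Then Γ = Γ₁ - (s₀t₄/(1-t₂)) T - (s₀s₃/(1-t₂)) ρ̄∧T satisfies ∂̄Γ + (1/2)[Γ,Γ] = (i/2)(s₀²t₄/(1-t₂)) ω̄ + (i/2)(s₀²s₃/(1-t₂)) ω̄∧ρ̄ + i(s₀s₃²/(1-t₂)) ω̄∧ρ̄∧T∧W - (i/2)(s₀²t₄s₃/(1-t₂)²) ω̄∧T, i.e. ∂̄Γ + ∂⃗Γ + (1/2)[Γ,Γ] = 0 with the Chen vector field ∂⃗ as given in the paper. -/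

import Mathlib

/-- A (differential) Gerstenhaber algebra structure on a `ℂ`-algebra `F` whose
multiplication plays the role of the wedge product: an `ℕ`-grading `gr`, an odd
Schouten bracket `br` and a differential `D` satisfying the axioms (L1)-(L3),
(C1)-(C3) and (D1)-(D4) in their sign-explicit forms. -/
structure GA (F : Type*) [Ring F] [Algebra ℂ F] where
  gr : ℕ → Submodule ℂ F
  br : F →ₗ[ℂ] F →ₗ[ℂ] F
  D : F →ₗ[ℂ] F
  one_mem : (1 : F) ∈ gr 0
  mul_mem : ∀ {i j : ℕ} {a b : F}, a ∈ gr i → b ∈ gr j → a * b ∈ gr (i + j)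
  br_mem : ∀ {i j : ℕ} {a b : F}, a ∈ gr i → b ∈ gr j → br a b ∈ gr (i + j - 1)
  D_mem : ∀ {i : ℕ} {a : F}, a ∈ gr i → D a ∈ gr (i + 1)
  gcomm : ∀ {i j : ℕ} {a b : F}, a ∈ gr i → b ∈ gr j →
    a * b = ((-1 : ℂ) ^ (i * j)) • (b * a)
  br_symm : ∀ {i j : ℕ} {a b : F}, a ∈ gr i → b ∈ gr j →
    br a b = ((-1 : ℂ) ^ (i * j + i + j)) • br b a
  leibniz : ∀ {i j : ℕ} {a b : F} (c : F), a ∈ gr i → b ∈ gr j →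
    br (a * b) c = a * br b c + ((-1 : ℂ) ^ (i * j)) • (b * br a c)
  leibniz' : ∀ {i j : ℕ} {a b : F} (c : F), a ∈ gr i → b ∈ gr j →
    br a (b * c) = br a b * c + ((-1 : ℂ) ^ (j + i * j)) • (b * br a c)
  D_mul : ∀ {i : ℕ} {a : F} (b : F), a ∈ gr i →
    D (a * b) = D a * b + ((-1 : ℂ) ^ i) • (a * D b)
  D_D : ∀ a : F, D (D a) = 0
  D_br : ∀ {i : ℕ} {a : F} (b : F), a ∈ gr i →
    D (br a b) = br (D a) b - ((-1 : ℂ) ^ i) • br a (D b)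

/-- The differential Gerstenhaber algebra of the Kodaira surface: it is generated
as an exterior algebra by the degree-one elements `T, W, ρ̄, ω̄`; the sole nonzero
Schouten bracket among degree-one elements is `[T, ρ̄] = -(i/2) ω̄`, and the
differential is determined by `∂̄T = -(i/2) ω̄∧W` and zero on the other generators. -/
structure KodairaGA (F : Type*) [Ring F] [Algebra ℂ F] extends GA F where
  T : F
  W : F
  ρ : F
  ω : F
  T_mem : T ∈ gr 1
  W_mem : W ∈ gr 1
  ρ_mem : ρ ∈ gr 1
  ω_mem : ω ∈ gr 1
  br_T_ρ : br T ρ = (-(Complex.I)/2) • ω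
  br_T_T : br T T = 0
  br_T_W : br T W = 0
  br_T_ω : br T ω = 0
  br_W_W : br W W = 0
  br_W_ρ : br W ρ = 0
  br_W_ω : br W ω = 0
  br_ρ_ρ : br ρ ρ = 0
  br_ρ_ω : br ρ ω = 0
  br_ω_ω : br ω ω = 0
  D_T : D T = (-(Complex.I)/2) • (ω * W)
  D_W : D W = 0
  D_ρ : D ρ = 0
  D_ω : D ω = 0

set_option maxHeartbeats 3200000 in
/-- Extended Maurer-Cartan equation for the Kodaira surface.  Work in the Kodaira
Gerstenhaber algebra enlarged by odd (anticommuting, degree-one) parameters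
`s₀,…,s₅` which are killed by the bracket and the differential, with even complex
parameters `t₀,…,t₅`, `|t₂| < 1`.  For
`Γ = Γ₁ - (s₀t₄/(1-t₂)) T - (s₀s₃/(1-t₂)) ρ̄∧T`, where
`Γ₁ = t₀ + t₁ ω̄∧ρ̄ + t₂ ρ̄∧W + t₃ ω̄∧T + t₄ T∧W + t₅ ω̄∧ρ̄∧T∧W + s₀ρ̄ + s₁ω̄ + s₂W
+ s₃ ρ̄∧T∧W + s₄ ω̄∧T∧W + s₅ ω̄∧ρ̄∧T`, one has
`∂̄Γ + (1/2)[Γ,Γ] = (i/2)(s₀²t₄/(1-t₂)) ω̄ + (i/2)(s₀²s₃/(1-t₂)) ω̄∧ρ̄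
+ i(s₀s₃²/(1-t₂)) ω̄∧ρ̄∧T∧W - (i/2)(s₀²t₄s₃/(1-t₂)²) ω̄∧T`,
i.e. `∂̄Γ + ∂⃗Γ + (1/2)[Γ,Γ] = 0` with the Chen vector field `∂⃗` of the paper. -/
theorem stmt16 {F : Type*} [Ring F] [Algebra ℂ F] (K : KodairaGA F)
    (s0 s1 s2 s3 s4 s5 : F)
    (hs0 : s0 ∈ K.gr 1) (hs1 : s1 ∈ K.gr 1) (hs2 : s2 ∈ K.gr 1)
    (hs3 : s3 ∈ K.gr 1) (hs4 : s4 ∈ K.gr 1) (hs5 : s5 ∈ K.gr 1)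
    (hbrs : ∀ s ∈ ({s0, s1, s2, s3, s4, s5} : Set F),
      (∀ x : F, K.br s x = 0) ∧ (∀ x : F, K.br x s = 0) ∧ K.D s = 0)
    (t0 t1 t2 t3 t4 t5 : ℂ) (ht2 : ‖t2‖ < 1)
    (Γ : F)
    (hΓ : Γ = algebraMap ℂ F t0 + t1 • (K.ω * K.ρ) + t2 • (K.ρ * K.W)
      + t3 • (K.ω * K.T) + t4 • (K.T * K.W) + t5 • (K.ω * (K.ρ * (K.T * K.W)))
      + s0 * K.ρ + s1 * K.ω + s2 * K.W + s3 * (K.ρ * (K.T * K.W))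
      + s4 * (K.ω * (K.T * K.W)) + s5 * (K.ω * (K.ρ * K.T))
      - (t4 / (1 - t2)) • (s0 * K.T)
      - (1 / (1 - t2)) • (s0 * (s3 * (K.ρ * K.T)))) :
    K.D Γ + (1/2 : ℂ) • K.br Γ Γ
      = (Complex.I/2 * (t4 / (1 - t2))) • (s0 * s0 * K.ω)
        + (Complex.I/2 * (1 / (1 - t2))) • (s0 * s0 * (s3 * (K.ω * K.ρ)))
        + (Complex.I * (1 / (1 - t2))) • (s0 * (s3 * (s3 *
            (K.ω * (K.ρ * (K.T * K.W))))))
        - (Complex.I/2 * (t4 / (1 - t2) ^ 2)) • (s0 * (s0 * (s3 * (K.ω * K.T)))) := by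
  -- extract the s-parameter properties
  obtain ⟨hbl0, hbr0, hD0⟩ := hbrs s0 (by simp)
  obtain ⟨hbl1, hbr1, hD1'⟩ := hbrs s1 (by simp)
  obtain ⟨hbl2, hbr2, hD2⟩ := hbrs s2 (by simp)
  obtain ⟨hbl3, hbr3, hD3⟩ := hbrs s3 (by simp)
  obtain ⟨hbl4, hbr4, hD4⟩ := hbrs s4 (by simp)
  obtain ⟨hbl5, hbr5, hD5⟩ := hbrs s5 (by simp)
  have hne : (1:ℂ) - t2 ≠ 0 := by
    intro h
    have h1 : t2 = 1 := by linear_combination -h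
    rw [h1] at ht2
    simp at ht2
  have halfzero : ∀ x : F, x + x = 0 → x = 0 := by
    intro x h
    have h2 : (2:ℂ) • x = 0 := by rw [two_smul]; exact h
    calc x = ((2:ℂ)⁻¹ * 2) • x := by norm_num
      _ = (2:ℂ)⁻¹ • ((2:ℂ) • x) := by rw [mul_smul]
      _ = 0 := by rw [h2, smul_zero]
  have swap : ∀ a b : F, a ∈ K.gr 1 → b ∈ K.gr 1 → a * b = -(b * a) := by
    intro a b ha hb
    have h := K.gcomm ha hb
    simpa using h
  have sq : ∀ a : F, a ∈ K.gr 1 → a * a = 0 := by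
    intro a ha
    have h := swap a a ha ha
    refine halfzero _ ?_
    nth_rewrite 2 [h]
    simp
  have swap' : ∀ a b : F, a ∈ K.gr 1 → b ∈ K.gr 1 → ∀ x : F,
      a * (b * x) = -(b * (a * x)) := by
    intro a b ha hb x
    rw [← mul_assoc, swap a b ha hb, neg_mul, mul_assoc]
  have sq' : ∀ a : F, a ∈ K.gr 1 → ∀ x : F, a * (a * x) = 0 := by
    intro a ha x
    rw [← mul_assoc, sq a ha, zero_mul]
  have sq_s0 : s0 * s0 = 0 := sq _ hs0
  have sq'_s0 : ∀ x : F, s0 * (s0 * x) = 0 := sq' _ hs0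
  have sq_s1 : s1 * s1 = 0 := sq _ hs1
  have sq'_s1 : ∀ x : F, s1 * (s1 * x) = 0 := sq' _ hs1
  have sw_s1_s0 : s1 * s0 = -(s0 * s1) := swap _ _ hs1 hs0
  have sw'_s1_s0 : ∀ x : F, s1 * (s0 * x) = -(s0 * (s1 * x)) := swap' _ _ hs1 hs0
  have sq_s2 : s2 * s2 = 0 := sq _ hs2
  have sq'_s2 : ∀ x : F, s2 * (s2 * x) = 0 := sq' _ hs2
  have sw_s2_s0 : s2 * s0 = -(s0 * s2) := swap _ _ hs2 hs0
  have sw'_s2_s0 : ∀ x : F, s2 * (s0 * x) = -(s0 * (s2 * x)) := swap' _ _ hs2 hs0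
  have sw_s2_s1 : s2 * s1 = -(s1 * s2) := swap _ _ hs2 hs1
  have sw'_s2_s1 : ∀ x : F, s2 * (s1 * x) = -(s1 * (s2 * x)) := swap' _ _ hs2 hs1
  have sq_s3 : s3 * s3 = 0 := sq _ hs3
  have sq'_s3 : ∀ x : F, s3 * (s3 * x) = 0 := sq' _ hs3
  have sw_s3_s0 : s3 * s0 = -(s0 * s3) := swap _ _ hs3 hs0
  have sw'_s3_s0 : ∀ x : F, s3 * (s0 * x) = -(s0 * (s3 * x)) := swap' _ _ hs3 hs0
  have sw_s3_s1 : s3 * s1 = -(s1 * s3) := swap _ _ hs3 hs1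
  have sw'_s3_s1 : ∀ x : F, s3 * (s1 * x) = -(s1 * (s3 * x)) := swap' _ _ hs3 hs1
  have sw_s3_s2 : s3 * s2 = -(s2 * s3) := swap _ _ hs3 hs2
  have sw'_s3_s2 : ∀ x : F, s3 * (s2 * x) = -(s2 * (s3 * x)) := swap' _ _ hs3 hs2
  have sq_s4 : s4 * s4 = 0 := sq _ hs4
  have sq'_s4 : ∀ x : F, s4 * (s4 * x) = 0 := sq' _ hs4
  have sw_s4_s0 : s4 * s0 = -(s0 * s4) := swap _ _ hs4 hs0
  have sw'_s4_s0 : ∀ x : F, s4 * (s0 * x) = -(s0 * (s4 * x)) := swap' _ _ hs4 hs0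
  have sw_s4_s1 : s4 * s1 = -(s1 * s4) := swap _ _ hs4 hs1
  have sw'_s4_s1 : ∀ x : F, s4 * (s1 * x) = -(s1 * (s4 * x)) := swap' _ _ hs4 hs1
  have sw_s4_s2 : s4 * s2 = -(s2 * s4) := swap _ _ hs4 hs2
  have sw'_s4_s2 : ∀ x : F, s4 * (s2 * x) = -(s2 * (s4 * x)) := swap' _ _ hs4 hs2
  have sw_s4_s3 : s4 * s3 = -(s3 * s4) := swap _ _ hs4 hs3
  have sw'_s4_s3 : ∀ x : F, s4 * (s3 * x) = -(s3 * (s4 * x)) := swap' _ _ hs4 hs3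
  have sq_s5 : s5 * s5 = 0 := sq _ hs5
  have sq'_s5 : ∀ x : F, s5 * (s5 * x) = 0 := sq' _ hs5
  have sw_s5_s0 : s5 * s0 = -(s0 * s5) := swap _ _ hs5 hs0
  have sw'_s5_s0 : ∀ x : F, s5 * (s0 * x) = -(s0 * (s5 * x)) := swap' _ _ hs5 hs0
  have sw_s5_s1 : s5 * s1 = -(s1 * s5) := swap _ _ hs5 hs1
  have sw'_s5_s1 : ∀ x : F, s5 * (s1 * x) = -(s1 * (s5 * x)) := swap' _ _ hs5 hs1
  have sw_s5_s2 : s5 * s2 = -(s2 * s5) := swap _ _ hs5 hs2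
  have sw'_s5_s2 : ∀ x : F, s5 * (s2 * x) = -(s2 * (s5 * x)) := swap' _ _ hs5 hs2
  have sw_s5_s3 : s5 * s3 = -(s3 * s5) := swap _ _ hs5 hs3
  have sw'_s5_s3 : ∀ x : F, s5 * (s3 * x) = -(s3 * (s5 * x)) := swap' _ _ hs5 hs3
  have sw_s5_s4 : s5 * s4 = -(s4 * s5) := swap _ _ hs5 hs4
  have sw'_s5_s4 : ∀ x : F, s5 * (s4 * x) = -(s4 * (s5 * x)) := swap' _ _ hs5 hs4
  have sq_om : K.ω * K.ω = 0 := sq _ K.ω_mem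
  have sq'_om : ∀ x : F, K.ω * (K.ω * x) = 0 := sq' _ K.ω_mem
  have sw_om_s0 : K.ω * s0 = -(s0 * K.ω) := swap _ _ K.ω_mem hs0
  have sw'_om_s0 : ∀ x : F, K.ω * (s0 * x) = -(s0 * (K.ω * x)) := swap' _ _ K.ω_mem hs0
  have sw_om_s1 : K.ω * s1 = -(s1 * K.ω) := swap _ _ K.ω_mem hs1
  have sw'_om_s1 : ∀ x : F, K.ω * (s1 * x) = -(s1 * (K.ω * x)) := swap' _ _ K.ω_mem hs1
  have sw_om_s2 : K.ω * s2 = -(s2 * K.ω) := swap _ _ K.ω_mem hs2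
  have sw'_om_s2 : ∀ x : F, K.ω * (s2 * x) = -(s2 * (K.ω * x)) := swap' _ _ K.ω_mem hs2
  have sw_om_s3 : K.ω * s3 = -(s3 * K.ω) := swap _ _ K.ω_mem hs3
  have sw'_om_s3 : ∀ x : F, K.ω * (s3 * x) = -(s3 * (K.ω * x)) := swap' _ _ K.ω_mem hs3
  have sw_om_s4 : K.ω * s4 = -(s4 * K.ω) := swap _ _ K.ω_mem hs4
  have sw'_om_s4 : ∀ x : F, K.ω * (s4 * x) = -(s4 * (K.ω * x)) := swap' _ _ K.ω_mem hs4
  have sw_om_s5 : K.ω * s5 = -(s5 * K.ω) := swap _ _ K.ω_mem hs5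
  have sw'_om_s5 : ∀ x : F, K.ω * (s5 * x) = -(s5 * (K.ω * x)) := swap' _ _ K.ω_mem hs5
  have sq_rh : K.ρ * K.ρ = 0 := sq _ K.ρ_mem
  have sq'_rh : ∀ x : F, K.ρ * (K.ρ * x) = 0 := sq' _ K.ρ_mem
  have sw_rh_s0 : K.ρ * s0 = -(s0 * K.ρ) := swap _ _ K.ρ_mem hs0
  have sw'_rh_s0 : ∀ x : F, K.ρ * (s0 * x) = -(s0 * (K.ρ * x)) := swap' _ _ K.ρ_mem hs0
  have sw_rh_s1 : K.ρ * s1 = -(s1 * K.ρ) := swap _ _ K.ρ_mem hs1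
  have sw'_rh_s1 : ∀ x : F, K.ρ * (s1 * x) = -(s1 * (K.ρ * x)) := swap' _ _ K.ρ_mem hs1
  have sw_rh_s2 : K.ρ * s2 = -(s2 * K.ρ) := swap _ _ K.ρ_mem hs2
  have sw'_rh_s2 : ∀ x : F, K.ρ * (s2 * x) = -(s2 * (K.ρ * x)) := swap' _ _ K.ρ_mem hs2
  have sw_rh_s3 : K.ρ * s3 = -(s3 * K.ρ) := swap _ _ K.ρ_mem hs3
  have sw'_rh_s3 : ∀ x : F, K.ρ * (s3 * x) = -(s3 * (K.ρ * x)) := swap' _ _ K.ρ_mem hs3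
  have sw_rh_s4 : K.ρ * s4 = -(s4 * K.ρ) := swap _ _ K.ρ_mem hs4
  have sw'_rh_s4 : ∀ x : F, K.ρ * (s4 * x) = -(s4 * (K.ρ * x)) := swap' _ _ K.ρ_mem hs4
  have sw_rh_s5 : K.ρ * s5 = -(s5 * K.ρ) := swap _ _ K.ρ_mem hs5
  have sw'_rh_s5 : ∀ x : F, K.ρ * (s5 * x) = -(s5 * (K.ρ * x)) := swap' _ _ K.ρ_mem hs5
  have sw_rh_om : K.ρ * K.ω = -(K.ω * K.ρ) := swap _ _ K.ρ_mem K.ω_mem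
  have sw'_rh_om : ∀ x : F, K.ρ * (K.ω * x) = -(K.ω * (K.ρ * x)) := swap' _ _ K.ρ_mem K.ω_mem
  have sq_tt : K.T * K.T = 0 := sq _ K.T_mem
  have sq'_tt : ∀ x : F, K.T * (K.T * x) = 0 := sq' _ K.T_mem
  have sw_tt_s0 : K.T * s0 = -(s0 * K.T) := swap _ _ K.T_mem hs0
  have sw'_tt_s0 : ∀ x : F, K.T * (s0 * x) = -(s0 * (K.T * x)) := swap' _ _ K.T_mem hs0
  have sw_tt_s1 : K.T * s1 = -(s1 * K.T) := swap _ _ K.T_mem hs1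
  have sw'_tt_s1 : ∀ x : F, K.T * (s1 * x) = -(s1 * (K.T * x)) := swap' _ _ K.T_mem hs1
  have sw_tt_s2 : K.T * s2 = -(s2 * K.T) := swap _ _ K.T_mem hs2
  have sw'_tt_s2 : ∀ x : F, K.T * (s2 * x) = -(s2 * (K.T * x)) := swap' _ _ K.T_mem hs2
  have sw_tt_s3 : K.T * s3 = -(s3 * K.T) := swap _ _ K.T_mem hs3
  have sw'_tt_s3 : ∀ x : F, K.T * (s3 * x) = -(s3 * (K.T * x)) := swap' _ _ K.T_mem hs3
  have sw_tt_s4 : K.T * s4 = -(s4 * K.T) := swap _ _ K.T_mem hs4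
  have sw'_tt_s4 : ∀ x : F, K.T * (s4 * x) = -(s4 * (K.T * x)) := swap' _ _ K.T_mem hs4
  have sw_tt_s5 : K.T * s5 = -(s5 * K.T) := swap _ _ K.T_mem hs5
  have sw'_tt_s5 : ∀ x : F, K.T * (s5 * x) = -(s5 * (K.T * x)) := swap' _ _ K.T_mem hs5
  have sw_tt_om : K.T * K.ω = -(K.ω * K.T) := swap _ _ K.T_mem K.ω_mem
  have sw'_tt_om : ∀ x : F, K.T * (K.ω * x) = -(K.ω * (K.T * x)) := swap' _ _ K.T_mem K.ω_mem
  have sw_tt_rh : K.T * K.ρ = -(K.ρ * K.T) := swap _ _ K.T_mem K.ρ_mem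
  have sw'_tt_rh : ∀ x : F, K.T * (K.ρ * x) = -(K.ρ * (K.T * x)) := swap' _ _ K.T_mem K.ρ_mem
  have sq_ww : K.W * K.W = 0 := sq _ K.W_mem
  have sq'_ww : ∀ x : F, K.W * (K.W * x) = 0 := sq' _ K.W_mem
  have sw_ww_s0 : K.W * s0 = -(s0 * K.W) := swap _ _ K.W_mem hs0
  have sw'_ww_s0 : ∀ x : F, K.W * (s0 * x) = -(s0 * (K.W * x)) := swap' _ _ K.W_mem hs0
  have sw_ww_s1 : K.W * s1 = -(s1 * K.W) := swap _ _ K.W_mem hs1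
  have sw'_ww_s1 : ∀ x : F, K.W * (s1 * x) = -(s1 * (K.W * x)) := swap' _ _ K.W_mem hs1
  have sw_ww_s2 : K.W * s2 = -(s2 * K.W) := swap _ _ K.W_mem hs2
  have sw'_ww_s2 : ∀ x : F, K.W * (s2 * x) = -(s2 * (K.W * x)) := swap' _ _ K.W_mem hs2
  have sw_ww_s3 : K.W * s3 = -(s3 * K.W) := swap _ _ K.W_mem hs3
  have sw'_ww_s3 : ∀ x : F, K.W * (s3 * x) = -(s3 * (K.W * x)) := swap' _ _ K.W_mem hs3
  have sw_ww_s4 : K.W * s4 = -(s4 * K.W) := swap _ _ K.W_mem hs4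
  have sw'_ww_s4 : ∀ x : F, K.W * (s4 * x) = -(s4 * (K.W * x)) := swap' _ _ K.W_mem hs4
  have sw_ww_s5 : K.W * s5 = -(s5 * K.W) := swap _ _ K.W_mem hs5
  have sw'_ww_s5 : ∀ x : F, K.W * (s5 * x) = -(s5 * (K.W * x)) := swap' _ _ K.W_mem hs5
  have sw_ww_om : K.W * K.ω = -(K.ω * K.W) := swap _ _ K.W_mem K.ω_mem
  have sw'_ww_om : ∀ x : F, K.W * (K.ω * x) = -(K.ω * (K.W * x)) := swap' _ _ K.W_mem K.ω_mem
  have sw_ww_rh : K.W * K.ρ = -(K.ρ * K.W) := swap _ _ K.W_mem K.ρ_mem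
  have sw'_ww_rh : ∀ x : F, K.W * (K.ρ * x) = -(K.ρ * (K.W * x)) := swap' _ _ K.W_mem K.ρ_mem
  have sw_ww_tt : K.W * K.T = -(K.T * K.W) := swap _ _ K.W_mem K.T_mem
  have sw'_ww_tt : ∀ x : F, K.W * (K.T * x) = -(K.T * (K.W * x)) := swap' _ _ K.W_mem K.T_mem
  -- reversed primitive brackets
  have brρT : K.br K.ρ K.T = (Complex.I/2) • K.ω := by
    rw [K.br_symm K.ρ_mem K.T_mem, K.br_T_ρ]
    module
  have brρW : K.br K.ρ K.W = 0 := by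
    rw [K.br_symm K.ρ_mem K.W_mem, K.br_W_ρ, smul_zero]
  have brWT : K.br K.W K.T = 0 := by
    rw [K.br_symm K.W_mem K.T_mem, K.br_T_W, smul_zero]
  have brωT : K.br K.ω K.T = 0 := by
    rw [K.br_symm K.ω_mem K.T_mem, K.br_T_ω, smul_zero]
  have brωρ : K.br K.ω K.ρ = 0 := by
    rw [K.br_symm K.ω_mem K.ρ_mem, K.br_ρ_ω, smul_zero]
  have brωW : K.br K.ω K.W = 0 := by
    rw [K.br_symm K.ω_mem K.W_mem, K.br_W_ω, smul_zero]
  have br1l : ∀ x : F, K.br 1 x = 0 := by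
    intro x
    have h := K.leibniz x K.one_mem K.one_mem
    simpa using h
  have br1r : ∀ a : F, a ∈ K.gr 1 → K.br a 1 = 0 := by
    intro a ha
    have h := K.leibniz' (1:F) ha K.one_mem
    simpa using h
  have brT1 : K.br K.T 1 = 0 := br1r _ K.T_mem
  have brW1 : K.br K.W 1 = 0 := br1r _ K.W_mem
  have brρ1 : K.br K.ρ 1 = 0 := br1r _ K.ρ_mem
  have brω1 : K.br K.ω 1 = 0 := br1r _ K.ω_mem
  have hD1 : K.D (1:F) = 0 := by
    have h := K.D_mul (1:F) K.one_mem
    simpa using h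
  -- Leibniz rules, signs evaluated
  have lzr : ∀ a b : F, a ∈ K.gr 1 → b ∈ K.gr 1 → ∀ c : F,
      K.br a (b * c) = K.br a b * c + b * K.br a c := by
    intro a b ha hb c
    have h := K.leibniz' c ha hb
    norm_num at h
    exact h
  have lzl1 : ∀ a b : F, a ∈ K.gr 1 → b ∈ K.gr 1 → ∀ c : F,
      K.br (a * b) c = a * K.br b c - b * K.br a c := by
    intro a b ha hb c
    rw [K.leibniz c ha hb]
    norm_num [sub_eq_add_neg]
  have lzl2 : ∀ a b : F, a ∈ K.gr 1 → b ∈ K.gr 2 → ∀ c : F,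
      K.br (a * b) c = a * K.br b c + b * K.br a c := by
    intro a b ha hb c
    rw [K.leibniz c ha hb]
    norm_num
  have lzl3 : ∀ a b : F, a ∈ K.gr 1 → b ∈ K.gr 3 → ∀ c : F,
      K.br (a * b) c = a * K.br b c - b * K.br a c := by
    intro a b ha hb c
    rw [K.leibniz c ha hb]
    norm_num [sub_eq_add_neg]
  have Dl : ∀ a b : F, a ∈ K.gr 1 → K.D (a * b) = K.D a * b - a * K.D b := by
    intro a b ha
    rw [K.D_mul b ha]
    norm_num [sub_eq_add_neg]
  -- composite gradings
  have hmTW : K.T * K.W ∈ K.gr 2 := K.mul_mem K.T_mem K.W_mem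
  have hmρT : K.ρ * K.T ∈ K.gr 2 := K.mul_mem K.ρ_mem K.T_mem
  have hmρTW : K.ρ * (K.T * K.W) ∈ K.gr 3 := K.mul_mem K.ρ_mem hmTW
  have hmωTW : K.ω * (K.T * K.W) ∈ K.gr 3 := K.mul_mem K.ω_mem hmTW
  have hmωρT : K.ω * (K.ρ * K.T) ∈ K.gr 3 := K.mul_mem K.ω_mem hmρT
  have hms3ρT : s3 * (K.ρ * K.T) ∈ K.gr 3 := K.mul_mem hs3 hmρT
  -- brackets of the generators with Γ
  have hbrTΓ : K.br K.T Γ =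
      (-(Complex.I)/2 * t2) • (K.ω * K.W)
      + (-(Complex.I)/2) • (s0 * K.ω)
      + (-(Complex.I)/2) • (s3 * (K.ω * (K.T * K.W)))
      + (Complex.I/2 * (1 / (1 - t2))) • (s0 * (s3 * (K.ω * K.T))) := by
    rw [hΓ]
    simp only [map_add, map_sub, map_smul, LinearMap.add_apply, LinearMap.sub_apply, LinearMap.smul_apply, Algebra.algebraMap_eq_smul_one, lzr, hs0, hs1, hs2, hs3, hs4, hs5, K.T_mem, K.W_mem, K.ρ_mem, K.ω_mem, hmTW, hmρT, hmρTW, hmωTW, hmωρT, hms3ρT, K.br_T_ρ, K.br_T_T, K.br_T_W, K.br_T_ω, K.br_W_W, K.br_W_ρ, K.br_W_ω, K.br_ρ_ρ, K.br_ρ_ω, K.br_ω_ω, brρT, brρW, brWT, brωT, brωρ, brωW, hbl0, hbr0, hbl1, hbr1, hbl2, hbr2, hbl3, hbr3, hbl4, hbr4, hbl5, hbr5, brT1, brW1, brρ1, brω1,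
      mul_assoc, mul_one, one_mul, mul_zero, zero_mul, add_zero, zero_add, smul_zero, zero_smul, smul_smul, smul_mul_assoc, mul_smul_comm, neg_mul, mul_neg, neg_neg, smul_neg, neg_smul, sub_zero, zero_sub, neg_zero, mul_add, mul_sub, add_mul, sub_mul,
    sq_s0,
    sq'_s0,
    sq_s1,
    sq'_s1,
    sw_s1_s0,
    sw'_s1_s0,
    sq_s2,
    sq'_s2,
    sw_s2_s0,
    sw'_s2_s0,
    sw_s2_s1,
    sw'_s2_s1,
    sq_s3,
    sq'_s3,
    sw_s3_s0,
    sw'_s3_s0,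
    sw_s3_s1,
    sw'_s3_s1,
    sw_s3_s2,
    sw'_s3_s2,
    sq_s4,
    sq'_s4,
    sw_s4_s0,
    sw'_s4_s0,
    sw_s4_s1,
    sw'_s4_s1,
    sw_s4_s2,
    sw'_s4_s2,
    sw_s4_s3,
    sw'_s4_s3,
    sq_s5,
    sq'_s5,
    sw_s5_s0,
    sw'_s5_s0,
    sw_s5_s1,
    sw'_s5_s1,
    sw_s5_s2,
    sw'_s5_s2,
    sw_s5_s3,
    sw'_s5_s3,
    sw_s5_s4,
    sw'_s5_s4,
    sq_om,
    sq'_om,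
    sw_om_s0,
    sw'_om_s0,
    sw_om_s1,
    sw'_om_s1,
    sw_om_s2,
    sw'_om_s2,
    sw_om_s3,
    sw'_om_s3,
    sw_om_s4,
    sw'_om_s4,
    sw_om_s5,
    sw'_om_s5,
    sq_rh,
    sq'_rh,
    sw_rh_s0,
    sw'_rh_s0,
    sw_rh_s1,
    sw'_rh_s1,
    sw_rh_s2,
    sw'_rh_s2,
    sw_rh_s3,
    sw'_rh_s3,
    sw_rh_s4,
    sw'_rh_s4,
    sw_rh_s5,
    sw'_rh_s5,
    sw_rh_om,
    sw'_rh_om,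
    sq_tt,
    sq'_tt,
    sw_tt_s0,
    sw'_tt_s0,
    sw_tt_s1,
    sw'_tt_s1,
    sw_tt_s2,
    sw'_tt_s2,
    sw_tt_s3,
    sw'_tt_s3,
    sw_tt_s4,
    sw'_tt_s4,
    sw_tt_s5,
    sw'_tt_s5,
    sw_tt_om,
    sw'_tt_om,
    sw_tt_rh,
    sw'_tt_rh,
    sq_ww,
    sq'_ww,
    sw_ww_s0,
    sw'_ww_s0,
    sw_ww_s1,
    sw'_ww_s1,
    sw_ww_s2,
    sw'_ww_s2,
    sw_ww_s3,
    sw'_ww_s3,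
    sw_ww_s4,
    sw'_ww_s4,
    sw_ww_s5,
    sw'_ww_s5,
    sw_ww_om,
    sw'_ww_om,
    sw_ww_rh,
    sw'_ww_rh,
    sw_ww_tt,
    sw'_ww_tt]
    match_scalars <;> ring
  have hbrρΓ : K.br K.ρ Γ =
      (Complex.I/2 * t4) • (K.ω * K.W)
      - (Complex.I/2) • (s3 * (K.ω * (K.ρ * K.W)))
      - (Complex.I/2 * (t4 / (1 - t2))) • (s0 * K.ω)
      + (Complex.I/2 * (1 / (1 - t2))) • (s0 * (s3 * (K.ω * K.ρ))) := by
    rw [hΓ]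
    simp only [map_add, map_sub, map_smul, LinearMap.add_apply, LinearMap.sub_apply, LinearMap.smul_apply, Algebra.algebraMap_eq_smul_one, lzr, hs0, hs1, hs2, hs3, hs4, hs5, K.T_mem, K.W_mem, K.ρ_mem, K.ω_mem, hmTW, hmρT, hmρTW, hmωTW, hmωρT, hms3ρT, K.br_T_ρ, K.br_T_T, K.br_T_W, K.br_T_ω, K.br_W_W, K.br_W_ρ, K.br_W_ω, K.br_ρ_ρ, K.br_ρ_ω, K.br_ω_ω, brρT, brρW, brWT, brωT, brωρ, brωW, hbl0, hbr0, hbl1, hbr1, hbl2, hbr2, hbl3, hbr3, hbl4, hbr4, hbl5, hbr5, brT1, brW1, brρ1, brω1,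
      mul_assoc, mul_one, one_mul, mul_zero, zero_mul, add_zero, zero_add, smul_zero, zero_smul, smul_smul, smul_mul_assoc, mul_smul_comm, neg_mul, mul_neg, neg_neg, smul_neg, neg_smul, sub_zero, zero_sub, neg_zero, mul_add, mul_sub, add_mul, sub_mul,
    sq_s0,
    sq'_s0,
    sq_s1,
    sq'_s1,
    sw_s1_s0,
    sw'_s1_s0,
    sq_s2,
    sq'_s2,
    sw_s2_s0,
    sw'_s2_s0,
    sw_s2_s1,
    sw'_s2_s1,
    sq_s3,
    sq'_s3,
    sw_s3_s0,
    sw'_s3_s0,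
    sw_s3_s1,
    sw'_s3_s1,
    sw_s3_s2,
    sw'_s3_s2,
    sq_s4,
    sq'_s4,
    sw_s4_s0,
    sw'_s4_s0,
    sw_s4_s1,
    sw'_s4_s1,
    sw_s4_s2,
    sw'_s4_s2,
    sw_s4_s3,
    sw'_s4_s3,
    sq_s5,
    sq'_s5,
    sw_s5_s0,
    sw'_s5_s0,
    sw_s5_s1,
    sw'_s5_s1,
    sw_s5_s2,
    sw'_s5_s2,
    sw_s5_s3,
    sw'_s5_s3,
    sw_s5_s4,
    sw'_s5_s4,
    sq_om,
    sq'_om,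
    sw_om_s0,
    sw'_om_s0,
    sw_om_s1,
    sw'_om_s1,
    sw_om_s2,
    sw'_om_s2,
    sw_om_s3,
    sw'_om_s3,
    sw_om_s4,
    sw'_om_s4,
    sw_om_s5,
    sw'_om_s5,
    sq_rh,
    sq'_rh,
    sw_rh_s0,
    sw'_rh_s0,
    sw_rh_s1,
    sw'_rh_s1,
    sw_rh_s2,
    sw'_rh_s2,
    sw_rh_s3,
    sw'_rh_s3,
    sw_rh_s4,
    sw'_rh_s4,
    sw_rh_s5,
    sw'_rh_s5,
    sw_rh_om,
    sw'_rh_om,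
    sq_tt,
    sq'_tt,
    sw_tt_s0,
    sw'_tt_s0,
    sw_tt_s1,
    sw'_tt_s1,
    sw_tt_s2,
    sw'_tt_s2,
    sw_tt_s3,
    sw'_tt_s3,
    sw_tt_s4,
    sw'_tt_s4,
    sw_tt_s5,
    sw'_tt_s5,
    sw_tt_om,
    sw'_tt_om,
    sw_tt_rh,
    sw'_tt_rh,
    sq_ww,
    sq'_ww,
    sw_ww_s0,
    sw'_ww_s0,
    sw_ww_s1,
    sw'_ww_s1,
    sw_ww_s2,
    sw'_ww_s2,
    sw_ww_s3,
    sw'_ww_s3,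
    sw_ww_s4,
    sw'_ww_s4,
    sw_ww_s5,
    sw'_ww_s5,
    sw_ww_om,
    sw'_ww_om,
    sw_ww_rh,
    sw'_ww_rh,
    sw_ww_tt,
    sw'_ww_tt]
    match_scalars <;> ring
  have hbrωΓ : K.br K.ω Γ = 0 := by
    rw [hΓ]
    simp only [map_add, map_sub, map_smul, LinearMap.add_apply, LinearMap.sub_apply, LinearMap.smul_apply, Algebra.algebraMap_eq_smul_one, lzr, hs0, hs1, hs2, hs3, hs4, hs5, K.T_mem, K.W_mem, K.ρ_mem, K.ω_mem, hmTW, hmρT, hmρTW, hmωTW, hmωρT, hms3ρT, K.br_T_ρ, K.br_T_T, K.br_T_W, K.br_T_ω, K.br_W_W, K.br_W_ρ, K.br_W_ω, K.br_ρ_ρ, K.br_ρ_ω, K.br_ω_ω, brρT, brρW, brWT, brωT, brωρ, brωW, hbl0, hbr0, hbl1, hbr1, hbl2, hbr2, hbl3, hbr3, hbl4, hbr4, hbl5, hbr5, brT1, brW1, brρ1, brω1,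
      mul_assoc, mul_one, one_mul, mul_zero, zero_mul, add_zero, zero_add, smul_zero, zero_smul, smul_smul, smul_mul_assoc, mul_smul_comm, neg_mul, mul_neg, neg_neg, smul_neg, neg_smul, sub_zero, zero_sub, neg_zero, mul_add, mul_sub, add_mul, sub_mul,
    sq_s0,
    sq'_s0,
    sq_s1,
    sq'_s1,
    sw_s1_s0,
    sw'_s1_s0,
    sq_s2,
    sq'_s2,
    sw_s2_s0,
    sw'_s2_s0,
    sw_s2_s1,
    sw'_s2_s1,
    sq_s3,
    sq'_s3,
    sw_s3_s0,
    sw'_s3_s0,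
    sw_s3_s1,
    sw'_s3_s1,
    sw_s3_s2,
    sw'_s3_s2,
    sq_s4,
    sq'_s4,
    sw_s4_s0,
    sw'_s4_s0,
    sw_s4_s1,
    sw'_s4_s1,
    sw_s4_s2,
    sw'_s4_s2,
    sw_s4_s3,
    sw'_s4_s3,
    sq_s5,
    sq'_s5,
    sw_s5_s0,
    sw'_s5_s0,
    sw_s5_s1,
    sw'_s5_s1,
    sw_s5_s2,
    sw'_s5_s2,
    sw_s5_s3,
    sw'_s5_s3,
    sw_s5_s4,
    sw'_s5_s4,
    sq_om,
    sq'_om,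
    sw_om_s0,
    sw'_om_s0,
    sw_om_s1,
    sw'_om_s1,
    sw_om_s2,
    sw'_om_s2,
    sw_om_s3,
    sw'_om_s3,
    sw_om_s4,
    sw'_om_s4,
    sw_om_s5,
    sw'_om_s5,
    sq_rh,
    sq'_rh,
    sw_rh_s0,
    sw'_rh_s0,
    sw_rh_s1,
    sw'_rh_s1,
    sw_rh_s2,
    sw'_rh_s2,
    sw_rh_s3,
    sw'_rh_s3,
    sw_rh_s4,
    sw'_rh_s4,
    sw_rh_s5,
    sw'_rh_s5,
    sw_rh_om,
    sw'_rh_om,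
    sq_tt,
    sq'_tt,
    sw_tt_s0,
    sw'_tt_s0,
    sw_tt_s1,
    sw'_tt_s1,
    sw_tt_s2,
    sw'_tt_s2,
    sw_tt_s3,
    sw'_tt_s3,
    sw_tt_s4,
    sw'_tt_s4,
    sw_tt_s5,
    sw'_tt_s5,
    sw_tt_om,
    sw'_tt_om,
    sw_tt_rh,
    sw'_tt_rh,
    sq_ww,
    sq'_ww,
    sw_ww_s0,
    sw'_ww_s0,
    sw_ww_s1,
    sw'_ww_s1,
    sw_ww_s2,
    sw'_ww_s2,
    sw_ww_s3,
    sw'_ww_s3,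
    sw_ww_s4,
    sw'_ww_s4,
    sw_ww_s5,
    sw'_ww_s5,
    sw_ww_om,
    sw'_ww_om,
    sw_ww_rh,
    sw'_ww_rh,
    sw_ww_tt,
    sw'_ww_tt]
  have hbrWΓ : K.br K.W Γ = 0 := by
    rw [hΓ]
    simp only [map_add, map_sub, map_smul, LinearMap.add_apply, LinearMap.sub_apply, LinearMap.smul_apply, Algebra.algebraMap_eq_smul_one, lzr, hs0, hs1, hs2, hs3, hs4, hs5, K.T_mem, K.W_mem, K.ρ_mem, K.ω_mem, hmTW, hmρT, hmρTW, hmωTW, hmωρT, hms3ρT, K.br_T_ρ, K.br_T_T, K.br_T_W, K.br_T_ω, K.br_W_W, K.br_W_ρ, K.br_W_ω, K.br_ρ_ρ, K.br_ρ_ω, K.br_ω_ω, brρT, brρW, brWT, brωT, brωρ, brωW, hbl0, hbr0, hbl1, hbr1, hbl2, hbr2, hbl3, hbr3, hbl4, hbr4, hbl5, hbr5, brT1, brW1, brρ1, brω1,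
      mul_assoc, mul_one, one_mul, mul_zero, zero_mul, add_zero, zero_add, smul_zero, zero_smul, smul_smul, smul_mul_assoc, mul_smul_comm, neg_mul, mul_neg, neg_neg, smul_neg, neg_smul, sub_zero, zero_sub, neg_zero, mul_add, mul_sub, add_mul, sub_mul,
    sq_s0,
    sq'_s0,
    sq_s1,
    sq'_s1,
    sw_s1_s0,
    sw'_s1_s0,
    sq_s2,
    sq'_s2,
    sw_s2_s0,
    sw'_s2_s0,
    sw_s2_s1,
    sw'_s2_s1,
    sq_s3,
    sq'_s3,
    sw_s3_s0,
    sw'_s3_s0,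
    sw_s3_s1,
    sw'_s3_s1,
    sw_s3_s2,
    sw'_s3_s2,
    sq_s4,
    sq'_s4,
    sw_s4_s0,
    sw'_s4_s0,
    sw_s4_s1,
    sw'_s4_s1,
    sw_s4_s2,
    sw'_s4_s2,
    sw_s4_s3,
    sw'_s4_s3,
    sq_s5,
    sq'_s5,
    sw_s5_s0,
    sw'_s5_s0,
    sw_s5_s1,
    sw'_s5_s1,
    sw_s5_s2,
    sw'_s5_s2,
    sw_s5_s3,
    sw'_s5_s3,
    sw_s5_s4,
    sw'_s5_s4,
    sq_om,
    sq'_om,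
    sw_om_s0,
    sw'_om_s0,
    sw_om_s1,
    sw'_om_s1,
    sw_om_s2,
    sw'_om_s2,
    sw_om_s3,
    sw'_om_s3,
    sw_om_s4,
    sw'_om_s4,
    sw_om_s5,
    sw'_om_s5,
    sq_rh,
    sq'_rh,
    sw_rh_s0,
    sw'_rh_s0,
    sw_rh_s1,
    sw'_rh_s1,
    sw_rh_s2,
    sw'_rh_s2,
    sw_rh_s3,
    sw'_rh_s3,
    sw_rh_s4,
    sw'_rh_s4,
    sw_rh_s5,
    sw'_rh_s5,
    sw_rh_om,
    sw'_rh_om,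
    sq_tt,
    sq'_tt,
    sw_tt_s0,
    sw'_tt_s0,
    sw_tt_s1,
    sw'_tt_s1,
    sw_tt_s2,
    sw'_tt_s2,
    sw_tt_s3,
    sw'_tt_s3,
    sw_tt_s4,
    sw'_tt_s4,
    sw_tt_s5,
    sw'_tt_s5,
    sw_tt_om,
    sw'_tt_om,
    sw_tt_rh,
    sw'_tt_rh,
    sq_ww,
    sq'_ww,
    sw_ww_s0,
    sw'_ww_s0,
    sw_ww_s1,
    sw'_ww_s1,
    sw_ww_s2,
    sw'_ww_s2,
    sw_ww_s3,
    sw'_ww_s3,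
    sw_ww_s4,
    sw'_ww_s4,
    sw_ww_s5,
    sw'_ww_s5,
    sw_ww_om,
    sw'_ww_om,
    sw_ww_rh,
    sw'_ww_rh,
    sw_ww_tt,
    sw'_ww_tt]
  -- the differential of Γ
  have hDΓ : K.D Γ =
      (-(Complex.I)/2 * (t4 / (1 - t2))) • (s0 * (K.ω * K.W))
      + (Complex.I/2 * (1 / (1 - t2))) • (s0 * (s3 * (K.ω * (K.ρ * K.W)))) := by
    rw [hΓ]
    simp only [map_add, map_sub, map_smul, LinearMap.add_apply, LinearMap.sub_apply, LinearMap.smul_apply, Algebra.algebraMap_eq_smul_one, Dl, hs0, hs1, hs2, hs3, hs4, hs5, K.T_mem, K.W_mem, K.ρ_mem, K.ω_mem, hmTW, hmρT, hmρTW, hmωTW, hmωρT, hms3ρT, K.D_T, K.D_W, K.D_ρ, K.D_ω, hD0, hD1', hD2, hD3,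
      hD4, hD5, hD1,
      mul_assoc, mul_one, one_mul, mul_zero, zero_mul, add_zero, zero_add, smul_zero, zero_smul, smul_smul, smul_mul_assoc, mul_smul_comm, neg_mul, mul_neg, neg_neg, smul_neg, neg_smul, sub_zero, zero_sub, neg_zero, mul_add, mul_sub, add_mul, sub_mul,
    sq_s0,
    sq'_s0,
    sq_s1,
    sq'_s1,
    sw_s1_s0,
    sw'_s1_s0,
    sq_s2,
    sq'_s2,
    sw_s2_s0,
    sw'_s2_s0,
    sw_s2_s1,
    sw'_s2_s1,
    sq_s3,
    sq'_s3,
    sw_s3_s0,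
    sw'_s3_s0,
    sw_s3_s1,
    sw'_s3_s1,
    sw_s3_s2,
    sw'_s3_s2,
    sq_s4,
    sq'_s4,
    sw_s4_s0,
    sw'_s4_s0,
    sw_s4_s1,
    sw'_s4_s1,
    sw_s4_s2,
    sw'_s4_s2,
    sw_s4_s3,
    sw'_s4_s3,
    sq_s5,
    sq'_s5,
    sw_s5_s0,
    sw'_s5_s0,
    sw_s5_s1,
    sw'_s5_s1,
    sw_s5_s2,
    sw'_s5_s2,
    sw_s5_s3,
    sw'_s5_s3,
    sw_s5_s4,
    sw'_s5_s4,
    sq_om,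
    sq'_om,
    sw_om_s0,
    sw'_om_s0,
    sw_om_s1,
    sw'_om_s1,
    sw_om_s2,
    sw'_om_s2,
    sw_om_s3,
    sw'_om_s3,
    sw_om_s4,
    sw'_om_s4,
    sw_om_s5,
    sw'_om_s5,
    sq_rh,
    sq'_rh,
    sw_rh_s0,
    sw'_rh_s0,
    sw_rh_s1,
    sw'_rh_s1,
    sw_rh_s2,
    sw'_rh_s2,
    sw_rh_s3,
    sw'_rh_s3,
    sw_rh_s4,
    sw'_rh_s4,
    sw_rh_s5,
    sw'_rh_s5,
    sw_rh_om,
    sw'_rh_om,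
    sq_tt,
    sq'_tt,
    sw_tt_s0,
    sw'_tt_s0,
    sw_tt_s1,
    sw'_tt_s1,
    sw_tt_s2,
    sw'_tt_s2,
    sw_tt_s3,
    sw'_tt_s3,
    sw_tt_s4,
    sw'_tt_s4,
    sw_tt_s5,
    sw'_tt_s5,
    sw_tt_om,
    sw'_tt_om,
    sw_tt_rh,
    sw'_tt_rh,
    sq_ww,
    sq'_ww,
    sw_ww_s0,
    sw'_ww_s0,
    sw_ww_s1,
    sw'_ww_s1,
    sw_ww_s2,
    sw'_ww_s2,
    sw_ww_s3,
    sw'_ww_s3,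
    sw_ww_s4,
    sw'_ww_s4,
    sw_ww_s5,
    sw'_ww_s5,
    sw_ww_om,
    sw'_ww_om,
    sw_ww_rh,
    sw'_ww_rh,
    sw_ww_tt,
    sw'_ww_tt]
    match_scalars <;> ring
  have h16 : (16:ℂ) - t2 * 32 + t2 ^ 2 * 16 ≠ 0 := by
    intro h
    apply hne
    have h2 : ((1:ℂ) - t2) ^ 2 = 0 := by linear_combination h / 16
    exact sq_eq_zero_iff.mp h2
  -- the bracket of Γ with itself
  have hBB : K.br Γ Γ =
      (Complex.I * (t4 / (1 - t2))) • (s0 * (K.ω * K.W))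
      - (Complex.I * (1 / (1 - t2))) • (s0 * (s3 * (K.ω * (K.ρ * K.W)))) := by
    nth_rewrite 1 [hΓ]
    simp only [map_add, map_sub, map_smul, LinearMap.add_apply, LinearMap.sub_apply, LinearMap.smul_apply, Algebra.algebraMap_eq_smul_one, lzl1, lzl2, lzl3, hs0, hs1, hs2, hs3, hs4, hs5, K.T_mem, K.W_mem, K.ρ_mem, K.ω_mem, hmTW, hmρT, hmρTW, hmωTW, hmωρT, hms3ρT, br1l, hbrTΓ, hbrρΓ, hbrωΓ, hbrWΓ, hbl0, hbl1, hbl2, hbl3, hbl4, hbl5, mul_zero, zero_mul, add_zero, zero_add, smul_zero, zero_smul]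
    
    simp only [mul_assoc, mul_one, one_mul, mul_zero, zero_mul, add_zero, zero_add, smul_zero, zero_smul, smul_smul, smul_mul_assoc, mul_smul_comm, neg_mul, mul_neg, neg_neg, smul_neg, neg_smul, sub_zero, zero_sub, neg_zero, mul_add, mul_sub, add_mul, sub_mul,
    sq_s0,
    sq'_s0,
    sq_s1,
    sq'_s1,
    sw_s1_s0,
    sw'_s1_s0,
    sq_s2,
    sq'_s2,
    sw_s2_s0,
    sw'_s2_s0,
    sw_s2_s1,
    sw'_s2_s1,
    sq_s3,
    sq'_s3,
    sw_s3_s0,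
    sw'_s3_s0,
    sw_s3_s1,
    sw'_s3_s1,
    sw_s3_s2,
    sw'_s3_s2,
    sq_s4,
    sq'_s4,
    sw_s4_s0,
    sw'_s4_s0,
    sw_s4_s1,
    sw'_s4_s1,
    sw_s4_s2,
    sw'_s4_s2,
    sw_s4_s3,
    sw'_s4_s3,
    sq_s5,
    sq'_s5,
    sw_s5_s0,
    sw'_s5_s0,
    sw_s5_s1,
    sw'_s5_s1,
    sw_s5_s2,
    sw'_s5_s2,
    sw_s5_s3,
    sw'_s5_s3,
    sw_s5_s4,
    sw'_s5_s4,
    sq_om,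
    sq'_om,
    sw_om_s0,
    sw'_om_s0,
    sw_om_s1,
    sw'_om_s1,
    sw_om_s2,
    sw'_om_s2,
    sw_om_s3,
    sw'_om_s3,
    sw_om_s4,
    sw'_om_s4,
    sw_om_s5,
    sw'_om_s5,
    sq_rh,
    sq'_rh,
    sw_rh_s0,
    sw'_rh_s0,
    sw_rh_s1,
    sw'_rh_s1,
    sw_rh_s2,
    sw'_rh_s2,
    sw_rh_s3,
    sw'_rh_s3,
    sw_rh_s4,
    sw'_rh_s4,
    sw_rh_s5,
    sw'_rh_s5,
    sw_rh_om,
    sw'_rh_om,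
    sq_tt,
    sq'_tt,
    sw_tt_s0,
    sw'_tt_s0,
    sw_tt_s1,
    sw'_tt_s1,
    sw_tt_s2,
    sw'_tt_s2,
    sw_tt_s3,
    sw'_tt_s3,
    sw_tt_s4,
    sw'_tt_s4,
    sw_tt_s5,
    sw'_tt_s5,
    sw_tt_om,
    sw'_tt_om,
    sw_tt_rh,
    sw'_tt_rh,
    sq_ww,
    sq'_ww,
    sw_ww_s0,
    sw'_ww_s0,
    sw_ww_s1,
    sw'_ww_s1,
    sw_ww_s2,
    sw'_ww_s2,
    sw_ww_s3,
    sw'_ww_s3,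
    sw_ww_s4,
    sw'_ww_s4,
    sw_ww_s5,
    sw'_ww_s5,
    sw_ww_om,
    sw'_ww_om,
    sw_ww_rh,
    sw'_ww_rh,
    sw_ww_tt,
    sw'_ww_tt]
    match_scalars <;> (field_simp [hne, h16]; try ring; try (field_simp [h16]; ring))
  rw [hDΓ, hBB]
  simp only [mul_assoc, mul_one, one_mul, mul_zero, zero_mul, add_zero, zero_add, smul_zero, zero_smul, smul_smul, smul_mul_assoc, mul_smul_comm, neg_mul, mul_neg, neg_neg, smul_neg, neg_smul, sub_zero, zero_sub, neg_zero, mul_add, mul_sub, add_mul, sub_mul,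
    sq_s0,
    sq'_s0,
    sq_s1,
    sq'_s1,
    sw_s1_s0,
    sw'_s1_s0,
    sq_s2,
    sq'_s2,
    sw_s2_s0,
    sw'_s2_s0,
    sw_s2_s1,
    sw'_s2_s1,
    sq_s3,
    sq'_s3,
    sw_s3_s0,
    sw'_s3_s0,
    sw_s3_s1,
    sw'_s3_s1,
    sw_s3_s2,
    sw'_s3_s2,
    sq_s4,
    sq'_s4,
    sw_s4_s0,
    sw'_s4_s0,
    sw_s4_s1,
    sw'_s4_s1,
    sw_s4_s2,
    sw'_s4_s2,
    sw_s4_s3,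
    sw'_s4_s3,
    sq_s5,
    sq'_s5,
    sw_s5_s0,
    sw'_s5_s0,
    sw_s5_s1,
    sw'_s5_s1,
    sw_s5_s2,
    sw'_s5_s2,
    sw_s5_s3,
    sw'_s5_s3,
    sw_s5_s4,
    sw'_s5_s4,
    sq_om,
    sq'_om,
    sw_om_s0,
    sw'_om_s0,
    sw_om_s1,
    sw'_om_s1,
    sw_om_s2,
    sw'_om_s2,
    sw_om_s3,
    sw'_om_s3,
    sw_om_s4,
    sw'_om_s4,
    sw_om_s5,
    sw'_om_s5,
    sq_rh,
    sq'_rh,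
    sw_rh_s0,
    sw'_rh_s0,
    sw_rh_s1,
    sw'_rh_s1,
    sw_rh_s2,
    sw'_rh_s2,
    sw_rh_s3,
    sw'_rh_s3,
    sw_rh_s4,
    sw'_rh_s4,
    sw_rh_s5,
    sw'_rh_s5,
    sw_rh_om,
    sw'_rh_om,
    sq_tt,
    sq'_tt,
    sw_tt_s0,
    sw'_tt_s0,
    sw_tt_s1,
    sw'_tt_s1,
    sw_tt_s2,
    sw'_tt_s2,
    sw_tt_s3,
    sw'_tt_s3,
    sw_tt_s4,
    sw'_tt_s4,
    sw_tt_s5,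
    sw'_tt_s5,
    sw_tt_om,
    sw'_tt_om,
    sw_tt_rh,
    sw'_tt_rh,
    sq_ww,
    sq'_ww,
    sw_ww_s0,
    sw'_ww_s0,
    sw_ww_s1,
    sw'_ww_s1,
    sw_ww_s2,
    sw'_ww_s2,
    sw_ww_s3,
    sw'_ww_s3,
    sw_ww_s4,
    sw'_ww_s4,
    sw_ww_s5,
    sw'_ww_s5,
    sw_ww_om,
    sw'_ww_om,
    sw_ww_rh,
    sw'_ww_rh,
    sw_ww_tt,
    sw'_ww_tt]
  match_scalars <;> ring
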